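/- The operators K_n preserve linear functions: K_n(t; x) = x for all x ≥ 1/2 and n ∈ ℕ. -/

import Mathlib

noncomputable section

/-- θ_k = 0 if k even, 1 if k odd. -/
def theta (k : ℕ) : ℝ := if Even k then 0 else 1

/-- Dunkl coefficients γ_μ(n). -/
def gammaD (mu : ℝ) (n : ℕ) : ℝ :=
  if Even n then
    2 ^ n * (Nat.factorial (n / 2)) * Real.Gamma ((n / 2 : ℕ) + mu + 1 / 2) / Real.Gamma (mu + 1 / 2)
  else
    2 ^ n * (Nat.factorial (n / 2)) * Real.Gamma ((n / 2 : ℕ) + mu + 3 / 2) / Real.Gamma (mu + 1 / 2)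

/-- Dunkl exponential e_μ(x) = Σ xⁿ/γ_μ(n). -/
def eD (mu x : ℝ) : ℝ := ∑' n : ℕ, x ^ n / gammaD mu n

/-- r_n(x) = x - 1/(2n). -/
def rn (n : ℕ) (x : ℝ) : ℝ := x - 1 / (2 * n)

/-- Modified Dunkl Szász–Mirakjan–Kantorovich operator K_n. -/
def Kn (mu : ℝ) (n : ℕ) (f : ℝ → ℝ) (x : ℝ) : ℝ :=
  (n / eD mu (n * rn n x)) * ∑' k : ℕ, (n * rn n x) ^ k / gammaD mu k *
    ∫ t in (((k : ℝ) + 2 * mu * theta k) / n)..(((k : ℝ) + 1 + 2 * mu * theta k) / n), f t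

/-- Stancu-type modified Dunkl Szász–Kantorovich operator K_n^*. -/
def KnStar (mu a b : ℝ) (n : ℕ) (f : ℝ → ℝ) (x : ℝ) : ℝ :=
  (n / eD mu (n * rn n x)) * ∑' k : ℕ, (n * rn n x) ^ k / gammaD mu k *
    ∫ t in (((k : ℝ) + 2 * mu * theta k) / n)..(((k : ℝ) + 1 + 2 * mu * theta k) / n),
      f ((n * t + a) / (n + b))

/-- Dunkl Szász–Kantorovich–Stancu operator T_n^*. -/
def TnStar (mu a b : ℝ) (n : ℕ) (f : ℝ → ℝ) (x : ℝ) : ℝ :=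
  (n / eD mu (n * x)) * ∑' k : ℕ, (n * x) ^ k / gammaD mu k *
    ∫ t in (((k : ℝ) + 2 * mu * theta k) / n)..(((k : ℝ) + 1 + 2 * mu * theta k) / n),
      f ((n * t + a) / (n + b))

/-- Modulus of continuity of f on [0,∞). -/
def modCont (f : ℝ → ℝ) (d : ℝ) : ℝ :=
  sSup {y | ∃ t s : ℝ, 0 ≤ t ∧ 0 ≤ s ∧ |t - s| ≤ d ∧ y = |f t - f s|}

lemma theta_nonneg (k : ℕ) : 0 ≤ theta k := by unfold theta; split <;> norm_num

lemma theta_zero : theta 0 = 0 := by simp [theta]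

lemma gammaD_pos {mu : ℝ} (hmu : 0 ≤ mu) (k : ℕ) : 0 < gammaD mu k := by
  have h1 : 0 < Real.Gamma (mu + 1/2) := Real.Gamma_pos_of_pos (by linarith)
  have h2 : (0:ℝ) ≤ ((k/2 : ℕ) : ℝ) := Nat.cast_nonneg _
  unfold gammaD
  split
  · have := Real.Gamma_pos_of_pos (show (0:ℝ) < ((k/2:ℕ):ℝ) + mu + 1/2 by linarith)
    exact div_pos (by positivity) h1
  · have := Real.Gamma_pos_of_pos (show (0:ℝ) < ((k/2:ℕ):ℝ) + mu + 3/2 by linarith)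
    exact div_pos (by positivity) h1

lemma gammaD_zero {mu : ℝ} (hmu : 0 ≤ mu) : gammaD mu 0 = 1 := by
  have h1 : Real.Gamma (mu + 1/2) ≠ 0 := (Real.Gamma_pos_of_pos (by linarith)).ne'
  simp [gammaD]
  simpa [show mu + 1/2 = mu + 2⁻¹ by norm_num] using h1

lemma gammaD_succ {mu : ℝ} (hmu : 0 ≤ mu) (k : ℕ) :
    gammaD mu (k+1) = ((k:ℝ)+1+2*mu*theta (k+1)) * gammaD mu k := by
  rcases Nat.even_or_odd k with ⟨m, rfl⟩ | ⟨m, rfl⟩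
  · have he : Even (m + m) := ⟨m, rfl⟩
    have ho : ¬ Even (m + m + 1) := by rintro ⟨c, hc⟩; omega
    have hd1 : (m + m) / 2 = m := by omega
    have hd2 : (m + m + 1) / 2 = m := by omega
    have ht : theta (m + m + 1) = 1 := if_neg ho
    have hG : Real.Gamma ((m:ℝ) + mu + 3/2) = ((m:ℝ) + mu + 1/2) * Real.Gamma ((m:ℝ) + mu + 1/2) := by
      have : (m:ℝ) + mu + 3/2 = ((m:ℝ) + mu + 1/2) + 1 := by ring
      rw [this, Real.Gamma_add_one (by positivity)]
    unfold gammaD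
    rw [if_neg ho, if_pos he, hd1, hd2, ht, hG]
    push_cast
    ring
  · have ho : ¬ Even (2 * m + 1) := by rintro ⟨c, hc⟩; omega
    have he : Even (2 * m + 1 + 1) := ⟨m + 1, by omega⟩
    have hd1 : (2 * m + 1) / 2 = m := by omega
    have hd2 : (2 * m + 1 + 1) / 2 = m + 1 := by omega
    have ht : theta (2 * m + 1 + 1) = 0 := if_pos he
    unfold gammaD
    rw [if_pos he, if_neg ho, hd1, hd2, ht, Nat.factorial_succ]
    have : ((m:ℕ) + 1 : ℕ) = m + 1 := rfl
    push_cast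
    rw [show ((m:ℝ) + 1 + mu + 1/2) = (m:ℝ) + mu + 3/2 by ring]
    ring

lemma summable_dunkl {mu : ℝ} (hmu : 0 ≤ mu) {y : ℝ} (hy : 0 ≤ y) :
    Summable (fun k : ℕ => y ^ k / gammaD mu k) := by
  apply summable_of_ratio_norm_eventually_le (r := 1/2) (by norm_num)
  filter_upwards [Filter.eventually_ge_atTop ⌈2*y⌉₊] with k hk
  have hγ := gammaD_pos hmu k
  have hγ' := gammaD_pos hmu (k+1)
  have hθ := theta_nonneg (k+1)
  have hky : 2*y ≤ (k:ℝ) := le_trans (Nat.le_ceil _) (Nat.cast_le.mpr hk)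
  have hd : (0:ℝ) < (k:ℝ)+1+2*mu*theta (k+1) := by positivity
  rw [Real.norm_eq_abs, Real.norm_eq_abs, abs_of_nonneg (by positivity),
    abs_of_nonneg (by positivity), gammaD_succ hmu k, pow_succ, mul_comm (y^k) y,
    ← div_mul_div_comm]
  apply mul_le_mul_of_nonneg_right _ (by positivity)
  rw [div_le_iff₀ hd]
  nlinarith [mul_nonneg hmu (theta_nonneg (k+1))]

theorem Kn_id (mu : ℝ) (hmu : 0 ≤ mu) (n : ℕ) (hn : 0 < n) (x : ℝ) (hx : 1 / 2 ≤ x) :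
    Kn mu n (fun t => t) x = x := by
  have hn' : (0:ℝ) < n := Nat.cast_pos.mpr hn
  have hn1 : (1:ℝ) ≤ n := by exact_mod_cast hn
  set y : ℝ := (n:ℝ) * rn n x with hy_def
  have hy2 : y = n * x - 1/2 := by
    rw [hy_def]; unfold rn; field_simp
  have hy : 0 ≤ y := by nlinarith
  set f : ℕ → ℝ := fun k => y ^ k / gammaD mu k with hf_def
  set g : ℕ → ℝ := fun k => ((k:ℝ) + 2*mu*theta k) * f k with hg_def
  have hf : Summable f := summable_dunkl hmu hy
  have hgsucc : ∀ k, g (k+1) = y * f k := by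
    intro k
    have hθ := theta_nonneg (k+1)
    have hd : (0:ℝ) < (k:ℝ)+1+2*mu*theta (k+1) := by positivity
    have hγ := (gammaD_pos hmu k).ne'
    simp only [hg_def, hf_def, gammaD_succ hmu k, pow_succ]
    push_cast
    field_simp
  have hg : Summable g := by
    rw [← summable_nat_add_iff 1]
    simpa [hgsucc] using hf.mul_left y
  have heD : eD mu y = ∑' k, f k := rfl
  have hE1 : (1:ℝ) ≤ eD mu y := by
    have h0 : f 0 = 1 := by simp [hf_def, gammaD_zero hmu]
    have h := Summable.le_tsum hf 0 (fun j _ => by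
      have := gammaD_pos hmu j
      simp only [hf_def]
      positivity)
    rw [h0] at h
    rw [heD]; exact h
  have hE : (0:ℝ) < eD mu y := lt_of_lt_of_le one_pos hE1
  have htsumg : ∑' k, g k = y * eD mu y := by
    rw [Summable.tsum_eq_zero_add hg]
    simp only [hgsucc]
    rw [tsum_mul_left, ← heD]
    simp [hg_def, hf_def, theta_zero]
  have hterm : ∀ k : ℕ, y ^ k / gammaD mu k *
      ∫ t in (((k:ℝ) + 2*mu*theta k)/n)..(((k:ℝ) + 1 + 2*mu*theta k)/n), t
      = (1/(n:ℝ)^2) * g k + (1/(2*(n:ℝ)^2)) * f k := by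
    intro k
    rw [integral_id]
    simp only [hg_def, hf_def]
    have hγ := (gammaD_pos hmu k).ne'
    field_simp
    ring
  simp only [Kn, ← hy_def]
  rw [tsum_congr hterm, Summable.tsum_add (hg.mul_left _) (hf.mul_left _), tsum_mul_left,
    tsum_mul_left, htsumg, ← heD]
  rw [hy2] at hE ⊢
  rw [div_mul_eq_mul_div, div_eq_iff hE.ne']
  field_simp
  ring
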